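/- arXiv:2402.02762 — 2 statements merged into one kernel-verified Lean document; each statement's English description precedes it below -/
import Mathlib

section
/- Let p be an odd prime, ζ_{p−1} a primitive (p−1)th root of unity, 𝔭 a prime ideal of ℤ[ζ_{p−1}] above p, and ψ the Dirichlet character mod p corresponding to 𝔭. Let B_{1,ψ} = (1/p)·Σ_{m=1}^{p−1} ψ(m)·m be the first generalized Bernoulli number of ψ. Then B_{1,ψ} ≠ 0, and for every integer n ≥ 1 the element (2/B_{1,ψ})·Σ_{d | n} ψ(d) of ℚ(ζ_{p−1}) has 𝔭-adic valuation ν_𝔭 at least 1. Equivalently, the Eisenstein series E_{1,ψ} = 1 − (2/B_{1,ψ}) Σ_{n≥1} (Σ_{d|n} ψ(d)) q^n satisfies ν_𝔭(E_{1,ψ}) ≥ 0 and E_{1,ψ} ≡ 1 mod 𝔭. -/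
open Complex NumberField
open scoped IntermediateField

noncomputable section

set_option maxHeartbeats 1000000
set_option synthInstance.maxHeartbeats 400000

/-- `ψ(m)·m ≡ 1 mod 𝔭` for all integers `1 ≤ m ≤ p - 1`; here the value `ψ(m)` is
required to be (the image in `ℂ` of) an element `b` of `𝓞 F`
(intended: `F = ℚ(ζ_{p-1})`, so `𝓞 F = ℤ[ζ_{p-1}]`). -/
def IsCorrChar (p : ℕ) (F : IntermediateField ℚ ℂ) (𝔭 : Ideal (𝓞 F))
    (ψ : DirichletCharacter ℂ p) : Prop :=
  ∀ m : ℕ, 1 ≤ m → m ≤ p - 1 →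
    ∃ b : 𝓞 F, ((b : F) : ℂ) = ψ (m : ZMod p) ∧ b * (m : 𝓞 F) - 1 ∈ 𝔭

/-- The first generalized Bernoulli number `B_{1,ψ} = (1/p)·∑_{m=1}^{p-1} ψ(m)·m`. -/
def bernoulliOne (p : ℕ) (ψ : DirichletCharacter ℂ p) : ℂ :=
  (p : ℂ)⁻¹ * ∑ m ∈ Finset.Icc 1 (p - 1), ψ (m : ZMod p) * (m : ℂ)

/-- **Theorem 2.4 (Lang; Rasmussen)**.  Let `ψ` be the character mod `p` corresponding to
a prime `𝔭` of `ℤ[ζ_{p-1}]` above `p`.  Then `B_{1,ψ} ≠ 0` and, for every `n ≥ 1`, the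
`n`-th coefficient `(2/B_{1,ψ})·∑_{d ∣ n} ψ(d)` of `1 - E_{1,ψ}` has `𝔭`-adic valuation
`ν_𝔭 ≥ 1`, i.e. it can be written as `b/s` with `b ∈ 𝔭` and `s ∈ 𝓞 ℚ(ζ_{p-1})`, `s ∉ 𝔭`.
Equivalently, `ν_𝔭(E_{1,ψ}) ≥ 0` and `E_{1,ψ} ≡ 1 mod 𝔭`. -/
theorem eisenstein_weight_one_congruent_to_one
    (p : ℕ) (hp : p.Prime) (hodd : Odd p)
    (ζ : ℂ) (hζ : IsPrimitiveRoot ζ (p - 1))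
    (𝔭 : Ideal (𝓞 ℚ⟮ζ⟯)) (h𝔭 : 𝔭.IsPrime) (h𝔭p : (p : 𝓞 ℚ⟮ζ⟯) ∈ 𝔭)
    (ψ : DirichletCharacter ℂ p) (hψ : IsCorrChar p ℚ⟮ζ⟯ 𝔭 ψ) :
    bernoulliOne p ψ ≠ 0 ∧
      ∀ n : ℕ, 1 ≤ n → ∃ b s : 𝓞 ℚ⟮ζ⟯, b ∈ 𝔭 ∧ s ∉ 𝔭 ∧
        ((s : ℚ⟮ζ⟯) : ℂ) *
            ((2 / bernoulliOne p ψ) * ∑ d ∈ n.divisors, ψ (d : ZMod p)) =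
          ((b : ℚ⟮ζ⟯) : ℂ) := by
  classical
  haveI : Fact p.Prime := ⟨hp⟩
  have hp0 : (p : ℂ) ≠ 0 := Nat.cast_ne_zero.mpr hp.ne_zero
  set φ : 𝓞 ℚ⟮ζ⟯ →+* ℂ :=
    (algebraMap ℚ⟮ζ⟯ ℂ).comp (algebraMap (𝓞 ℚ⟮ζ⟯) ℚ⟮ζ⟯) with hφdef
  have hφ : ∀ x : 𝓞 ℚ⟮ζ⟯, ((x : ℚ⟮ζ⟯) : ℂ) = φ x := fun _ => rfl
  have hφinj : Function.Injective φ :=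
    (algebraMap ℚ⟮ζ⟯ ℂ).injective.comp RingOfIntegers.coe_injective
  -- the sum `s` with `φ s = ∑ ψ(m) m`
  let bfun : ℕ → 𝓞 ℚ⟮ζ⟯ := fun m =>
    if h : 1 ≤ m ∧ m ≤ p - 1 then (hψ m h.1 h.2).choose else 0
  have hbfun : ∀ m, 1 ≤ m → m ≤ p - 1 →
      φ (bfun m) = ψ (m : ZMod p) ∧ bfun m * (m : 𝓞 ℚ⟮ζ⟯) - 1 ∈ 𝔭 := by
    intro m hm1 hm2
    simp only [bfun, dif_pos (⟨hm1, hm2⟩ : 1 ≤ m ∧ m ≤ p - 1)]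
    exact ⟨(hψ m hm1 hm2).choose_spec.1, (hψ m hm1 hm2).choose_spec.2⟩
  set s : 𝓞 ℚ⟮ζ⟯ := ∑ m ∈ Finset.Icc 1 (p - 1), bfun m * (m : 𝓞 ℚ⟮ζ⟯) with hsdef
  have hsφ : φ s = ∑ m ∈ Finset.Icc 1 (p - 1), ψ (m : ZMod p) * (m : ℂ) := by
    rw [hsdef, map_sum φ _ _]
    refine Finset.sum_congr rfl fun m hm => ?_
    rw [Finset.mem_Icc] at hm
    rw [map_mul φ _ _, (hbfun m hm.1 hm.2).1, map_natCast φ m]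
  have hmem : s - ((p - 1 : ℕ) : 𝓞 ℚ⟮ζ⟯) ∈ 𝔭 := by
    have h : ∑ m ∈ Finset.Icc 1 (p - 1), (bfun m * (m : 𝓞 ℚ⟮ζ⟯) - 1) ∈ 𝔭 :=
      Ideal.sum_mem _ fun m hm =>
        (hbfun m (Finset.mem_Icc.mp hm).1 (Finset.mem_Icc.mp hm).2).2
    have he : ∑ m ∈ Finset.Icc 1 (p - 1), (bfun m * (m : 𝓞 ℚ⟮ζ⟯) - 1)
        = s - ((p - 1 : ℕ) : 𝓞 ℚ⟮ζ⟯) := by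
      rw [Finset.sum_sub_distrib, Finset.sum_const, Nat.card_Icc,
        Nat.add_sub_cancel, nsmul_eq_mul, mul_one]
    rwa [he] at h
  have hspone : s + 1 ∈ 𝔭 := by
    have he : s + 1 = (s - ((p - 1 : ℕ) : 𝓞 ℚ⟮ζ⟯)) + (p : 𝓞 ℚ⟮ζ⟯) := by
      rw [Nat.cast_sub hp.one_lt.le, Nat.cast_one]; ring
    rw [he]
    exact Ideal.add_mem _ hmem h𝔭p
  have hs𝔭 : s ∉ 𝔭 := by
    intro hs
    have h1 : (1 : 𝓞 ℚ⟮ζ⟯) ∈ 𝔭 := by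
      have h2 := Ideal.sub_mem _ hspone hs
      rw [add_sub_cancel_left] at h2
      exact h2
    exact h𝔭.ne_top (Ideal.eq_top_of_isUnit_mem _ h1 isUnit_one)
  have hsne : φ s ≠ 0 := by
    intro h
    refine hs𝔭 ?_
    have hz : s = 0 := hφinj (by rw [h, map_zero])
    rw [hz]; exact 𝔭.zero_mem
  have hB : bernoulliOne p ψ = (p : ℂ)⁻¹ * φ s := by rw [bernoulliOne, hsφ]
  have hBne : bernoulliOne p ψ ≠ 0 := by
    rw [hB]; exact mul_ne_zero (inv_ne_zero hp0) hsne
  refine ⟨hBne, ?_⟩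
  intro n hn
  -- the divisor sum as an algebraic integer
  let tfun : ℕ → 𝓞 ℚ⟮ζ⟯ := fun d =>
    if h : 1 ≤ d % p ∧ d % p ≤ p - 1 then (hψ (d % p) h.1 h.2).choose else 0
  have htfun : ∀ d : ℕ, φ (tfun d) = ψ (d : ZMod p) := by
    intro d
    by_cases hd : d % p = 0
    · have hdz : ((d : ℕ) : ZMod p) = 0 := by
        rw [← ZMod.natCast_mod, hd, Nat.cast_zero]
      have hψ0 : ψ ((d : ℕ) : ZMod p) = 0 := by
        rw [hdz]
        exact ψ.map_nonunit not_isUnit_zero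
      simp only [tfun, hd]
      rw [dif_neg (by simp), map_zero, hψ0]
    · have h1d : 1 ≤ d % p := Nat.one_le_iff_ne_zero.mpr hd
      have h2d : d % p ≤ p - 1 := Nat.le_sub_one_of_lt (Nat.mod_lt d hp.pos)
      simp only [tfun, dif_pos (⟨h1d, h2d⟩ : 1 ≤ d % p ∧ d % p ≤ p - 1)]
      rw [show ((d : ℕ) : ZMod p) = (((d % p : ℕ)) : ZMod p) from (ZMod.natCast_mod d p).symm]
      exact (hψ (d % p) h1d h2d).choose_spec.1
  set t : 𝓞 ℚ⟮ζ⟯ := ∑ d ∈ n.divisors, tfun d with htdef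
  have htφ : φ t = ∑ d ∈ n.divisors, ψ (d : ZMod p) := by
    rw [htdef, map_sum φ _ _]
    exact Finset.sum_congr rfl fun d _ => htfun d
  refine ⟨(p : 𝓞 ℚ⟮ζ⟯) * (2 * t), s, Ideal.mul_mem_right _ _ h𝔭p, hs𝔭, ?_⟩
  rw [hφ, hφ, map_mul φ _ _, map_mul φ _ _, map_natCast φ, map_ofNat φ, ← htφ, hB]
  field_simp
end
end

section
/- Let p ≥ 5 be a prime, ζ_{p−1} a primitive (p−1)th root of unity, 𝔭 a prime ideal of ℤ[ζ_{p−1}] above p, and ψ the Dirichlet character mod p corresponding to 𝔭. Then there exists a prime ideal 𝔭' of ℤ[ζ_{p−1}] above p with 𝔭' ≠ 𝔭 such that Σ_{m=1}^{p−1} ψ(m)·m ∈ 𝔭' (equivalently, p·B_{1,ψ} ≡ 0 mod 𝔭', where B_{1,ψ} = (1/p)Σ_{m=1}^{p−1} ψ(m)·m). Consequently the Eisenstein series E_{1,ψ} is not congruent to 1 modulo the full ideal pℤ[ζ_{p−1}]. -/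
open Complex NumberField
open scoped IntermediateField

noncomputable section

/-- auxiliary: power sum vanishing mod `p`. -/
private lemma aux_sum_vanish (p : ℕ) (hp : p.Prime) (hp5 : 5 ≤ p) :
    ((∑ m ∈ Finset.Icc 1 (p - 1), m ^ ((p - 2) * (p - 2) + 1) : ℕ) : ZMod p) = 0 := by
  haveI : Fact p.Prime := ⟨hp⟩
  haveI : NeZero p := ⟨by omega⟩
  have hE : (p - 2) * (p - 2) + 1 = (p - 1) * (p - 3) + 2 := by
    obtain ⟨q, rfl⟩ : ∃ q, p = q + 5 := ⟨p - 5, by omega⟩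
    simp only [show q + 5 - 2 = q + 3 from by omega, show q + 5 - 1 = q + 4 from by omega,
      show q + 5 - 3 = q + 2 from by omega]
    ring
  push_cast
  have hstep : ∀ m : ℕ, m ∈ Finset.Icc 1 (p - 1) →
      ((m : ZMod p)) ^ ((p - 2) * (p - 2) + 1) = (m : ZMod p) ^ 2 := by
    intro m hm
    rw [Finset.mem_Icc] at hm
    have hm0 : (m : ZMod p) ≠ 0 := by
      rw [Ne, ZMod.natCast_eq_zero_iff]
      intro hdvd
      have := Nat.le_of_dvd (by omega) hdvd
      omega
    rw [hE, pow_add, pow_mul, ZMod.pow_card_sub_one_eq_one hm0, one_pow, one_mul]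
  rw [Finset.sum_congr rfl hstep]
  have h1 : Finset.Icc 1 (p - 1) = Finset.Ico 1 p := by
    rw [← Finset.Ico_add_one_right_eq_Icc]
    congr 1
    omega
  rw [h1]
  have h2 : ∑ m ∈ Finset.Ico 1 p, ((m : ZMod p)) ^ 2
      = ∑ m ∈ Finset.range p, ((m : ZMod p)) ^ 2 := by
    rw [Finset.range_eq_Ico, ← Finset.sum_Ico_consecutive _ (Nat.zero_le 1) (by omega : 1 ≤ p)]
    simp
  rw [h2]
  have h4 : ∑ m ∈ Finset.range p, ((m : ZMod p)) ^ 2 = ∑ x : ZMod p, x ^ 2 := by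
    refine Finset.sum_bij' (fun m _ => (m : ZMod p)) (fun x _ => x.val) ?_ ?_ ?_ ?_ ?_
    · intro a _; exact Finset.mem_univ _
    · intro a _; rw [Finset.mem_range]; exact ZMod.val_lt _
    · intro a ha; rw [Finset.mem_range] at ha; exact ZMod.val_cast_of_lt ha
    · intro a _; exact ZMod.natCast_rightInverse a
    · intro a _; rfl
  rw [h4]
  exact FiniteField.sum_pow_lt_card_sub_one (K := ZMod p) 2 (by rw [ZMod.card]; omega)

set_option maxHeartbeats 1600000 in
set_option synthInstance.maxHeartbeats 400000 in
/-- **Remark 2.5 (2)**.  Let `p ≥ 5` be a prime and `ψ` the character mod `p`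
corresponding to a prime `𝔭` of `ℤ[ζ_{p-1}]` above `p`.  Then there is a prime ideal
`𝔭' ≠ 𝔭` of `ℤ[ζ_{p-1}]` above `p` with `∑_{m=1}^{p-1} ψ(m)·m ∈ 𝔭'` (equivalently
`p·B_{1,ψ} ≡ 0 mod 𝔭'`); consequently `E_{1,ψ}` is not congruent to `1` modulo the full
ideal `pℤ[ζ_{p-1}]`, i.e. it is not the case that for every prime `𝔮` above `p` and
every `n ≥ 1` the `n`-th coefficient `(2/B_{1,ψ})·∑_{d ∣ n} ψ(d)` has `ν_𝔮 ≥ 1`. -/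
theorem eisenstein_weight_one_not_congruent_to_one_mod_p
    (p : ℕ) (hp : p.Prime) (hp5 : 5 ≤ p)
    (ζ : ℂ) (hζ : IsPrimitiveRoot ζ (p - 1))
    (𝔭 : Ideal (𝓞 ℚ⟮ζ⟯)) (h𝔭 : 𝔭.IsPrime) (h𝔭p : (p : 𝓞 ℚ⟮ζ⟯) ∈ 𝔭)
    (ψ : DirichletCharacter ℂ p) (hψ : IsCorrChar p ℚ⟮ζ⟯ 𝔭 ψ) :
    (∃ 𝔭' : Ideal (𝓞 ℚ⟮ζ⟯), 𝔭'.IsPrime ∧ (p : 𝓞 ℚ⟮ζ⟯) ∈ 𝔭' ∧ 𝔭' ≠ 𝔭 ∧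
        ∀ S : 𝓞 ℚ⟮ζ⟯,
          ((S : ℚ⟮ζ⟯) : ℂ) = ∑ m ∈ Finset.Icc 1 (p - 1), ψ (m : ZMod p) * (m : ℂ) →
            S ∈ 𝔭') ∧
      ¬ (∀ 𝔮 : Ideal (𝓞 ℚ⟮ζ⟯), 𝔮.IsPrime → (p : 𝓞 ℚ⟮ζ⟯) ∈ 𝔮 →
          ∀ n : ℕ, 1 ≤ n → ∃ b s : 𝓞 ℚ⟮ζ⟯, b ∈ 𝔮 ∧ s ∉ 𝔮 ∧
            ((s : ℚ⟮ζ⟯) : ℂ) *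
                ((2 / bernoulliOne p ψ) * ∑ d ∈ n.divisors, ψ (d : ZMod p)) =
              ((b : ℚ⟮ζ⟯) : ℂ)) := by
  classical
  haveI : Fact p.Prime := ⟨hp⟩
  haveI := h𝔭
  have hp1 : 1 < p := hp.one_lt
  have hn0 : 0 < p - 1 := by omega
  haveI : NeZero (p - 1) := ⟨by omega⟩
  -- the embedding of the ring of integers into ℂ
  set ε : 𝓞 ℚ⟮ζ⟯ →+* ℂ :=
    (algebraMap ℚ⟮ζ⟯ ℂ).comp (algebraMap (𝓞 ℚ⟮ζ⟯) ℚ⟮ζ⟯) with hεdef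
  have hε_coe : ∀ x : 𝓞 ℚ⟮ζ⟯, ((x : ℚ⟮ζ⟯) : ℂ) = ε x := fun _ => rfl
  have hε_inj : Function.Injective ε :=
    (algebraMap ℚ⟮ζ⟯ ℂ).injective.comp RingOfIntegers.coe_injective
  -- integers in prime ideals over p
  have hmem_int : ∀ 𝔮 : Ideal (𝓞 ℚ⟮ζ⟯), 𝔮.IsPrime → (p : 𝓞 ℚ⟮ζ⟯) ∈ 𝔮 →
      ∀ t : ℤ, ((t : 𝓞 ℚ⟮ζ⟯) ∈ 𝔮 ↔ (p : ℤ) ∣ t) := by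
    intro 𝔮 hQ hpQ t
    constructor
    · intro ht
      by_contra hnd
      have hgcd : Int.gcd (p : ℤ) t = 1 := by
        have h1 : ¬ p ∣ t.natAbs := by
          intro h
          exact hnd (Int.dvd_natAbs.1 (Int.natCast_dvd_natCast.2 h))
        have := (Nat.Prime.coprime_iff_not_dvd hp).2 h1
        simpa [Int.gcd, Int.natAbs_natCast] using this
      obtain ⟨a, c, hac⟩ := Int.isCoprime_iff_gcd_eq_one.2 hgcd
      have h1 : ((a * p + c * t : ℤ) : 𝓞 ℚ⟮ζ⟯) ∈ 𝔮 := by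
        push_cast
        exact add_mem (Ideal.mul_mem_left _ _ hpQ) (Ideal.mul_mem_left _ _ ht)
      rw [hac] at h1
      norm_num at h1
      exact hQ.ne_top (Ideal.eq_top_of_isUnit_mem _ h1 isUnit_one)
    · rintro ⟨k, rfl⟩
      push_cast
      exact Ideal.mul_mem_right _ _ hpQ
  have hpO : (p : 𝓞 ℚ⟮ζ⟯) ≠ 0 := by
    intro h
    have := congrArg ε h
    rw [map_natCast, map_zero] at this
    exact (Nat.cast_ne_zero (R := ℂ)).2 (by omega) this
  -- the chosen integral character values
  have hm0 : ∀ m : ℕ, 1 ≤ m → m ≤ p - 1 → ((m : ℕ) : ZMod p) ≠ 0 := by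
    intro m h1 h2
    rw [Ne, ZMod.natCast_eq_zero_iff]
    intro h
    have := Nat.le_of_dvd (by omega) h
    omega
  set b : ℕ → 𝓞 ℚ⟮ζ⟯ :=
    fun m => if h : 1 ≤ m ∧ m ≤ p - 1 then (hψ m h.1 h.2).choose else 1 with hbdef
  have hbC : ∀ m : ℕ, 1 ≤ m → m ≤ p - 1 → ε (b m) = ψ ((m : ℕ) : ZMod p) := by
    intro m h1 h2
    rw [← hε_coe]
    simp only [hbdef, dif_pos (And.intro h1 h2)]
    exact (hψ m h1 h2).choose_spec.1
  have hbP : ∀ m : ℕ, 1 ≤ m → m ≤ p - 1 → b m * (m : 𝓞 ℚ⟮ζ⟯) - 1 ∈ 𝔭 := by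
    intro m h1 h2
    simp only [hbdef, dif_pos (And.intro h1 h2)]
    exact (hψ m h1 h2).choose_spec.2
  have hbu : ∀ m : ℕ, 1 ≤ m → m ≤ p - 1 → (b m) ^ (p - 1) = 1 := by
    intro m h1 h2
    apply hε_inj
    rw [map_pow, map_one, hbC m h1 h2, ← map_pow,
      ZMod.pow_card_sub_one_eq_one (hm0 m h1 h2), map_one]
  have hFermatInt : ∀ m : ℕ, 1 ≤ m → m ≤ p - 1 → (p : ℤ) ∣ ((m : ℤ) ^ (p - 1) - 1) := by
    intro m h1 h2
    have : (((m : ℤ) ^ (p - 1) - 1 : ℤ) : ZMod p) = 0 := by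
      push_cast
      rw [ZMod.pow_card_sub_one_eq_one (hm0 m h1 h2)]
      ring
    exact (ZMod.intCast_zmod_eq_zero_iff_dvd _ _).1 this
  have hbp2 : ∀ m : ℕ, 1 ≤ m → m ≤ p - 1 →
      b m - ((m ^ (p - 2) : ℕ) : 𝓞 ℚ⟮ζ⟯) ∈ 𝔭 := by
    intro m h1 h2
    have t2 : b m * (((m : ℤ) ^ (p - 1) - 1 : ℤ) : 𝓞 ℚ⟮ζ⟯) ∈ 𝔭 :=
      Ideal.mul_mem_left _ _ ((hmem_int 𝔭 h𝔭 h𝔭p _).2 (hFermatInt m h1 h2))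
    have t1 : ((m ^ (p - 2) : ℕ) : 𝓞 ℚ⟮ζ⟯) * (b m * (m : 𝓞 ℚ⟮ζ⟯) - 1) ∈ 𝔭 :=
      Ideal.mul_mem_left _ _ (hbP m h1 h2)
    have heq : b m - ((m ^ (p - 2) : ℕ) : 𝓞 ℚ⟮ζ⟯) =
        ((m ^ (p - 2) : ℕ) : 𝓞 ℚ⟮ζ⟯) * (b m * (m : 𝓞 ℚ⟮ζ⟯) - 1)
          - b m * (((m : ℤ) ^ (p - 1) - 1 : ℤ) : 𝓞 ℚ⟮ζ⟯) := by
      push_cast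
      rw [show p - 1 = (p - 2) + 1 by omega, pow_succ]
      ring
    rw [heq]
    exact sub_mem t1 t2
  have hbpow : ∀ m : ℕ, 1 ≤ m → m ≤ p - 1 → ∀ e : ℕ,
      (b m) ^ e - ((m ^ ((p - 2) * e) : ℕ) : 𝓞 ℚ⟮ζ⟯) ∈ 𝔭 := by
    intro m h1 h2 e
    obtain ⟨c, hc⟩ := sub_dvd_pow_sub_pow (b m) (((m ^ (p - 2) : ℕ)) : 𝓞 ℚ⟮ζ⟯) e
    have heq : (b m) ^ e - ((m ^ ((p - 2) * e) : ℕ) : 𝓞 ℚ⟮ζ⟯) =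
        (b m - ((m ^ (p - 2) : ℕ) : 𝓞 ℚ⟮ζ⟯)) * c := by
      rw [← hc]
      push_cast
      rw [pow_mul]
    rw [heq]
    exact Ideal.mul_mem_right _ _ (hbp2 m h1 h2)
  -- the element S₀
  set S₀ : 𝓞 ℚ⟮ζ⟯ := ∑ m ∈ Finset.Icc 1 (p - 1), b m * (m : 𝓞 ℚ⟮ζ⟯) with hS₀def
  have hS0ε : ε S₀ = ∑ m ∈ Finset.Icc 1 (p - 1), ψ ((m : ℕ) : ZMod p) * ((m : ℕ) : ℂ) := by
    rw [hS₀def, map_sum]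
    refine Finset.sum_congr rfl fun m hm => ?_
    rw [Finset.mem_Icc] at hm
    rw [map_mul, map_natCast, hbC m hm.1 hm.2]
  have hS0sub : S₀ - ((p - 1 : ℕ) : 𝓞 ℚ⟮ζ⟯) ∈ 𝔭 := by
    have heq : S₀ - ((p - 1 : ℕ) : 𝓞 ℚ⟮ζ⟯) =
        ∑ m ∈ Finset.Icc 1 (p - 1), (b m * (m : 𝓞 ℚ⟮ζ⟯) - 1) := by
      rw [Finset.sum_sub_distrib, Finset.sum_const, Nat.card_Icc]
      simp [hS₀def]
    rw [heq]
    exact Ideal.sum_mem _ fun m hm =>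
      hbP m (Finset.mem_Icc.1 hm).1 (Finset.mem_Icc.1 hm).2
  have hS0np : S₀ ∉ 𝔭 := by
    intro h
    have h2 : ((p - 1 : ℕ) : 𝓞 ℚ⟮ζ⟯) ∈ 𝔭 := by
      have := sub_mem h hS0sub
      simpa using this
    have h3 : (p : ℤ) ∣ ((p - 1 : ℕ) : ℤ) :=
      (hmem_int 𝔭 h𝔭 h𝔭p _).1 (by exact_mod_cast h2)
    have h4 : p ∣ p - 1 := Int.natCast_dvd_natCast.1 h3
    have := Nat.le_of_dvd (by omega) h4
    omega
  have hS0ne : S₀ ≠ 0 := fun h => hS0np (h ▸ Ideal.zero_mem 𝔭)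
  -- cyclotomic field structure
  have hζ' : IsPrimitiveRoot ζ ((⟨p - 1, hn0⟩ : ℕ+) : ℕ) := hζ
  have hint : IsIntegral ℚ ζ := by
    refine ⟨Polynomial.X ^ (p - 1) - Polynomial.C 1, Polynomial.monic_X_pow_sub_C 1 (by omega), ?_⟩
    simp [hζ.pow_eq_one]
  haveI : FiniteDimensional ℚ ℚ⟮ζ⟯ := IntermediateField.adjoin.finiteDimensional hint
  haveI : NumberField ℚ⟮ζ⟯ := ⟨⟩
  haveI hcyc : IsCyclotomicExtension {p - 1} ℚ ℚ⟮ζ⟯ := by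
    have H := IntermediateField.adjoin_simple_toSubalgebra_of_isAlgebraic hint.isAlgebraic
    refine IsCyclotomicExtension.equiv _ _ _ (h := ?_) (.refl : ℚ⟮ζ⟯.toSubalgebra ≃ₐ[ℚ] _)
    rw [H]
    exact hζ'.adjoin_isCyclotomicExtension ℚ
  haveI : NeZero ((⟨p - 1, hn0⟩ : ℕ+) : ℕ) := ⟨hn0.ne'⟩
  have hirr : Irreducible (Polynomial.cyclotomic ((⟨p - 1, hn0⟩ : ℕ+) : ℕ) ℚ) :=
    Polynomial.cyclotomic.irreducible_rat hn0
  set Φ := IsCyclotomicExtension.autEquivPow ℚ⟮ζ⟯ hirr with hΦdef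
  set τ : (ZMod (p - 1))ˣ → (𝓞 ℚ⟮ζ⟯ →+* 𝓞 ℚ⟮ζ⟯) :=
    fun u => RingOfIntegers.mapRingHom (Φ.symm u) with hτdef
  have hτ_root : ∀ (u : (ZMod (p - 1))ˣ) (x : 𝓞 ℚ⟮ζ⟯), x ^ (p - 1) = 1 →
      τ u x = x ^ ((u : ZMod (p - 1)).val) := by
    intro u x hx
    have hζ₀ := IsCyclotomicExtension.zeta_spec (p - 1) ℚ ℚ⟮ζ⟯
    have hxF : (algebraMap (𝓞 ℚ⟮ζ⟯) ℚ⟮ζ⟯ x) ^ (p - 1) = 1 := by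
      rw [← map_pow, hx, map_one]
    obtain ⟨i, _, hix⟩ := hζ₀.eq_pow_of_pow_eq_one hxF
    have hQ : hζ₀.autToPow ℚ (Φ.symm u) = u := Φ.apply_symm_apply u
    have hσζ : (Φ.symm u) (IsCyclotomicExtension.zeta (p - 1) ℚ ℚ⟮ζ⟯) =
        (IsCyclotomicExtension.zeta (p - 1) ℚ ℚ⟮ζ⟯) ^ ((u : ZMod (p - 1)).val) := by
      have hspec := hζ₀.autToPow_spec ℚ (Φ.symm u)
      rw [hQ] at hspec
      exact hspec.symm
    apply RingOfIntegers.coe_injective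
    have hmap : algebraMap (𝓞 ℚ⟮ζ⟯) ℚ⟮ζ⟯ (τ u x) =
        (Φ.symm u) (algebraMap (𝓞 ℚ⟮ζ⟯) ℚ⟮ζ⟯ x) := rfl
    rw [hmap, map_pow, ← hix, map_pow, hσζ, ← pow_mul, ← pow_mul, mul_comm]
  -- the family of primes
  set P : (ZMod (p - 1))ˣ → Ideal (𝓞 ℚ⟮ζ⟯) := fun u => 𝔭.comap (τ u) with hPdef
  have hPprime : ∀ u, (P u).IsPrime := fun u => Ideal.comap_isPrime _ _
  have hPp : ∀ u, (p : 𝓞 ℚ⟮ζ⟯) ∈ P u := by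
    intro u
    rw [hPdef, Ideal.mem_comap, map_natCast]
    exact h𝔭p
  have hPbot : ∀ u, P u ≠ ⊥ := by
    intro u h
    exact hpO ((Submodule.mem_bot _).1 (h ▸ hPp u))
  have hmax : ∀ u, (P u).IsMaximal := fun u => Ideal.IsPrime.isMaximal (hPprime u) (hPbot u)
  -- generator of (ZMod p)ˣ
  obtain ⟨g, hg⟩ := IsCyclic.exists_generator (α := (ZMod p)ˣ)
  set m₁ : ℕ := (g : ZMod p).val with hm₁def
  have hm₁lt : m₁ < p := ZMod.val_lt _
  have hm₁1 : 1 ≤ m₁ := by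
    rcases Nat.eq_zero_or_pos m₁ with h | h
    · exfalso
      exact Units.ne_zero g (ZMod.val_eq_zero _ |>.1 h)
    · exact h
  have hm₁le : m₁ ≤ p - 1 := by omega
  have hordg : orderOf g = p - 1 := by
    rw [orderOf_eq_card_of_forall_mem_zpowers hg, Nat.card_eq_fintype_card,
      ZMod.card_units_eq_totient, Nat.totient_prime hp]
  have h1g : ((m₁ : ℕ) : ZMod p) = (g : ZMod p) := ZMod.natCast_rightInverse _
  have hPinj : Function.Injective P := by
    intro u v huv
    have key : ∀ w : (ZMod (p - 1))ˣ,
        b m₁ - ((m₁ ^ ((p - 2) * (w : ZMod (p - 1)).val) : ℕ) : 𝓞 ℚ⟮ζ⟯) ∈ P w := by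
      intro w
      rw [hPdef, Ideal.mem_comap, map_sub, map_natCast,
        hτ_root w (b m₁) (hbu m₁ hm₁1 hm₁le)]
      exact hbpow m₁ hm₁1 hm₁le _
    have h1 := key u
    rw [huv] at h1
    have h2 := key v
    have h3 : ((m₁ ^ ((p - 2) * (u : ZMod (p - 1)).val) : ℕ) : 𝓞 ℚ⟮ζ⟯)
        - ((m₁ ^ ((p - 2) * (v : ZMod (p - 1)).val) : ℕ) : 𝓞 ℚ⟮ζ⟯) ∈ P v := by
      have hs := sub_mem h2 h1
      have hx : (b m₁ - ((m₁ ^ ((p - 2) * (v : ZMod (p - 1)).val) : ℕ) : 𝓞 ℚ⟮ζ⟯))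
          - (b m₁ - ((m₁ ^ ((p - 2) * (u : ZMod (p - 1)).val) : ℕ) : 𝓞 ℚ⟮ζ⟯))
          = ((m₁ ^ ((p - 2) * (u : ZMod (p - 1)).val) : ℕ) : 𝓞 ℚ⟮ζ⟯)
            - ((m₁ ^ ((p - 2) * (v : ZMod (p - 1)).val) : ℕ) : 𝓞 ℚ⟮ζ⟯) := by ring
      rwa [hx] at hs
    have hdvd : (p : ℤ) ∣ ((m₁ ^ ((p - 2) * (u : ZMod (p - 1)).val) : ℕ) : ℤ)
        - ((m₁ ^ ((p - 2) * (v : ZMod (p - 1)).val) : ℕ) : ℤ) := by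
      refine (hmem_int (P v) (hPprime v) (hPp v) _).1 ?_
      push_cast
      push_cast at h3
      exact h3
    have hzm : ((m₁ : ZMod p)) ^ ((p - 2) * (u : ZMod (p - 1)).val)
        = (m₁ : ZMod p) ^ ((p - 2) * (v : ZMod (p - 1)).val) := by
      have h0 : ((((m₁ ^ ((p - 2) * (u : ZMod (p - 1)).val) : ℕ) : ℤ)
          - ((m₁ ^ ((p - 2) * (v : ZMod (p - 1)).val) : ℕ) : ℤ) : ℤ) : ZMod p) = 0 :=
        (ZMod.intCast_zmod_eq_zero_iff_dvd _ _).2 hdvd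
      push_cast at h0
      exact sub_eq_zero.1 h0
    have hzu : g ^ ((p - 2) * (u : ZMod (p - 1)).val)
        = g ^ ((p - 2) * (v : ZMod (p - 1)).val) := by
      apply Units.ext
      rw [Units.val_pow_eq_pow_val, Units.val_pow_eq_pow_val, ← h1g]
      exact hzm
    rw [pow_eq_pow_iff_modEq, hordg] at hzu
    have hcop : Nat.gcd (p - 1) (p - 2) = 1 := by
      rw [show p - 1 = (p - 2) + 1 by omega]
      exact Nat.coprime_self_add_left.2 (Nat.coprime_one_left _)
    have hmeq := Nat.ModEq.cancel_left_of_coprime hcop hzu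
    have hval : (u : ZMod (p - 1)).val = (v : ZMod (p - 1)).val :=
      hmeq.eq_of_lt_of_lt (ZMod.val_lt _) (ZMod.val_lt _)
    exact Units.ext (ZMod.val_injective _ hval)
  -- the unit -1 and the prime 𝔭'
  have hc1 : ((p - 2 : ℕ) : ZMod (p - 1)) = -1 := by
    rw [show (p - 2 : ℕ) = (p - 1) - 1 by omega,
      Nat.cast_sub (by omega : 1 ≤ p - 1), ZMod.natCast_self, Nat.cast_one, zero_sub]
  set u₁ : (ZMod (p - 1))ˣ :=
    ⟨((p - 2 : ℕ) : ZMod (p - 1)), ((p - 2 : ℕ) : ZMod (p - 1)),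
      by rw [hc1]; ring, by rw [hc1]; ring⟩ with hu₁def
  have he₁ : ((u₁ : ZMod (p - 1))).val = p - 2 := ZMod.val_natCast_of_lt (by omega)
  -- S₀ lies in P u₁
  have hτS : τ u₁ S₀ = ∑ m ∈ Finset.Icc 1 (p - 1), (b m) ^ (p - 2) * (m : 𝓞 ℚ⟮ζ⟯) := by
    rw [hS₀def, map_sum]
    refine Finset.sum_congr rfl fun m hm => ?_
    rw [Finset.mem_Icc] at hm
    rw [map_mul, map_natCast, hτ_root u₁ (b m) (hbu m hm.1 hm.2), he₁]
  have hτS𝔭 : τ u₁ S₀ ∈ 𝔭 := by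
    have hsum : τ u₁ S₀
        - ((∑ m ∈ Finset.Icc 1 (p - 1), m ^ ((p - 2) * (p - 2) + 1) : ℕ) : 𝓞 ℚ⟮ζ⟯) ∈ 𝔭 := by
      rw [hτS]
      push_cast
      rw [← Finset.sum_sub_distrib]
      refine Ideal.sum_mem _ fun m hm => ?_
      rw [Finset.mem_Icc] at hm
      have h := hbpow m hm.1 hm.2 (p - 2)
      have h2 := Ideal.mul_mem_right ((m : 𝓞 ℚ⟮ζ⟯)) _ h
      have hx : ((b m) ^ (p - 2) - ((m ^ ((p - 2) * (p - 2)) : ℕ) : 𝓞 ℚ⟮ζ⟯)) * (m : 𝓞 ℚ⟮ζ⟯)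
          = (b m) ^ (p - 2) * (m : 𝓞 ℚ⟮ζ⟯) - (m : 𝓞 ℚ⟮ζ⟯) ^ ((p - 2) * (p - 2) + 1) := by
        push_cast
        rw [pow_succ]
        ring
      rwa [hx] at h2
    have hdvd : p ∣ (∑ m ∈ Finset.Icc 1 (p - 1), m ^ ((p - 2) * (p - 2) + 1) : ℕ) :=
      (ZMod.natCast_eq_zero_iff _ _).1 (aux_sum_vanish p hp hp5)
    have hmem : ((∑ m ∈ Finset.Icc 1 (p - 1), m ^ ((p - 2) * (p - 2) + 1) : ℕ) : 𝓞 ℚ⟮ζ⟯) ∈ 𝔭 := by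
      obtain ⟨k, hk⟩ := hdvd
      rw [hk]
      push_cast
      exact Ideal.mul_mem_right _ _ h𝔭p
    have := add_mem hsum hmem
    simpa using this
  have hS0P : S₀ ∈ P u₁ := by
    rw [hPdef, Ideal.mem_comap]
    exact hτS𝔭
  have hPne : P u₁ ≠ 𝔭 := by
    intro h
    rw [h] at hS0P
    exact hS0np hS0P
  -- p ∣ absNorm (P u)
  have hNormP : ∀ u, p ∣ Ideal.absNorm (P u) := by
    intro u
    haveI := Ideal.Quotient.nontrivial_iff.mpr (hPprime u).ne_top
    have h1 : (1 : 𝓞 ℚ⟮ζ⟯ ⧸ P u) ≠ 0 := one_ne_zero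
    have h2 : p • (1 : 𝓞 ℚ⟮ζ⟯ ⧸ P u) = 0 := by
      rw [nsmul_eq_mul, mul_one, ← map_natCast (Ideal.Quotient.mk (P u)),
        Ideal.Quotient.eq_zero_iff_mem]
      exact hPp u
    have h3 : addOrderOf (1 : 𝓞 ℚ⟮ζ⟯ ⧸ P u) = p := addOrderOf_eq_prime h2 h1
    have h4 := addOrderOf_dvd_natCard (1 : 𝓞 ℚ⟮ζ⟯ ⧸ P u)
    rw [h3] at h4
    rw [Ideal.absNorm_apply, Submodule.cardQuot_apply]
    exact h4
  refine ⟨⟨P u₁, hPprime u₁, hPp u₁, hPne, ?_⟩, ?_⟩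
  · intro S hS
    have : S = S₀ := hε_inj (by rw [← hε_coe, hS, hS0ε])
    rw [this]
    exact hS0P
  -- part 2
  intro H
  obtain ⟨b', s, hb', hs, heq⟩ := H (P u₁) (hPprime u₁) (hPp u₁) 1 le_rfl
  rw [Nat.divisors_one, Finset.sum_singleton, Nat.cast_one, map_one, mul_one] at heq
  rw [hε_coe, hε_coe] at heq
  have hTne : ε S₀ ≠ 0 := fun h => hS0ne (hε_inj (by rw [h, map_zero]))
  have hp0 : (p : ℂ) ≠ 0 := Nat.cast_ne_zero.2 (by omega)
  have hBdef : bernoulliOne p ψ = (p : ℂ)⁻¹ * ε S₀ := by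
    rw [bernoulliOne, hS0ε]
  rw [hBdef] at heq
  have h5 : 2 * (p : 𝓞 ℚ⟮ζ⟯) * s = b' * S₀ := by
    apply hε_inj
    rw [map_mul, map_mul, map_mul, map_natCast, map_ofNat]
    field_simp [hp0, hTne] at heq
    linear_combination heq
  have hmulmem : (2 * s) * (p : 𝓞 ℚ⟮ζ⟯) ∈ (P u₁) ^ 2 := by
    have hmm : b' * S₀ ∈ P u₁ * P u₁ := Ideal.mul_mem_mul hb' hS0P
    rw [← pow_two] at hmm
    have hx : (2 * s) * (p : 𝓞 ℚ⟮ζ⟯) = 2 * (p : 𝓞 ℚ⟮ζ⟯) * s := by ring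
    rw [hx, h5]
    exact hmm
  have h2s : (2 : 𝓞 ℚ⟮ζ⟯) * s ∉ P u₁ := by
    intro h
    rcases (hPprime u₁).mem_or_mem h with h | h
    · have h2 : ((2 : ℤ) : 𝓞 ℚ⟮ζ⟯) ∈ P u₁ := by
        push_cast
        exact h
      have := (hmem_int (P u₁) (hPprime u₁) (hPp u₁) 2).1 h2
      have := Int.le_of_dvd (by norm_num) this
      omega
    · exact hs h
  have hpmem : (p : 𝓞 ℚ⟮ζ⟯) ∈ (P u₁) ^ 2 := by
    rcases Ideal.IsPrime.mul_mem_pow _ hmulmem with h | h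
    · exact absurd h h2s
    · exact h
  -- norm counting
  have hNval : Module.finrank ℚ ℚ⟮ζ⟯ = (p - 1).totient := by
    have := IsCyclotomicExtension.finrank (n := p - 1) ℚ⟮ζ⟯ hirr
    exact this
  have hNpos : 0 < (p - 1).totient := Nat.totient_pos.2 (by omega)
  set Q : (ZMod (p - 1))ˣ → Ideal (𝓞 ℚ⟮ζ⟯) :=
    fun u => if u = u₁ then (P u₁) ^ 2 else P u with hQdef
  have hQdvd : ∀ u, Q u ∣ Ideal.span {(p : 𝓞 ℚ⟮ζ⟯)} := by
    intro u
    rw [Ideal.dvd_iff_le, Ideal.span_singleton_le_iff_mem]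
    by_cases h : u = u₁
    · simp only [hQdef, if_pos h]
      exact hpmem
    · simp only [hQdef, if_neg h]
      exact hPp u
  have hPcop : ∀ a c : (ZMod (p - 1))ˣ, a ≠ c → IsCoprime (P a) (P c) := by
    intro a c hac
    rw [Ideal.isCoprime_iff_sup_eq]
    exact Ideal.IsMaximal.coprime_of_ne (hmax a) (hmax c) fun h => hac (hPinj h)
  have hQcop : Pairwise (Function.onFun IsCoprime Q) := by
    intro u v huv
    by_cases hu : u = u₁ <;> by_cases hv : v = u₁
    · exact absurd (hu.trans hv.symm) huv
    · simp only [Function.onFun, hQdef, if_pos hu, if_neg hv]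
      exact IsCoprime.pow_left (hPcop u₁ v (fun h => hv (h.symm ▸ rfl)))
    · simp only [Function.onFun, hQdef, if_neg hu, if_pos hv]
      exact IsCoprime.pow_right (hPcop u u₁ (fun h => hu h))
    · simp only [Function.onFun, hQdef, if_neg hu, if_neg hv]
      exact hPcop u v huv
  have hprod : ∏ u, Q u ∣ Ideal.span {(p : 𝓞 ℚ⟮ζ⟯)} :=
    Fintype.prod_dvd_of_coprime hQcop hQdvd
  have hnorm := map_dvd Ideal.absNorm hprod
  rw [map_prod, Ideal.absNorm_span_singleton] at hnorm
  have hnormp : (Algebra.norm ℤ ((p : 𝓞 ℚ⟮ζ⟯))).natAbs = p ^ (p - 1).totient := by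
    have hbas := Module.Free.chooseBasis ℤ (𝓞 ℚ⟮ζ⟯)
    have hx : ((p : 𝓞 ℚ⟮ζ⟯)) = algebraMap ℤ (𝓞 ℚ⟮ζ⟯) (p : ℤ) := by
      simp
    rw [hx, Algebra.norm_algebraMap_of_basis hbas, Int.natAbs_pow, Int.natAbs_natCast,
      ← Module.finrank_eq_card_chooseBasisIndex, NumberField.RingOfIntegers.rank, hNval]
  have hQnormdvd : ∀ u, p ∣ Ideal.absNorm (Q u) := by
    intro u
    by_cases h : u = u₁
    · simp only [hQdef, if_pos h, map_pow]
      exact dvd_pow (hNormP u₁) (by norm_num)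
    · simp only [hQdef, if_neg h]
      exact hNormP u
  have hdvd2 : p ^ ((p - 1).totient + 1) ∣ ∏ u, Ideal.absNorm (Q u) := by
    rw [← Finset.mul_prod_erase _ _ (Finset.mem_univ u₁)]
    have h1 : p ^ 2 ∣ Ideal.absNorm (Q u₁) := by
      simp only [hQdef, if_pos rfl, map_pow]
      exact pow_dvd_pow_of_dvd (hNormP u₁) 2
    have h2 : p ^ ((p - 1).totient - 1) ∣
        ∏ u ∈ Finset.univ.erase u₁, Ideal.absNorm (Q u) := by
      have hcard : (Finset.univ.erase u₁).card = (p - 1).totient - 1 := by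
        rw [Finset.card_erase_of_mem (Finset.mem_univ _), Finset.card_univ,
          ZMod.card_units_eq_totient]
      calc p ^ ((p - 1).totient - 1) = ∏ _u ∈ Finset.univ.erase u₁, p := by
            rw [Finset.prod_const, hcard]
        _ ∣ _ := Finset.prod_dvd_prod_of_dvd _ _ fun u _ => hQnormdvd u
    have := mul_dvd_mul h1 h2
    rwa [← pow_add, show 2 + ((p - 1).totient - 1) = (p - 1).totient + 1 by omega] at this
  have hfinal : p ^ ((p - 1).totient + 1) ∣ p ^ (p - 1).totient := by
    refine dvd_trans hdvd2 ?_
    rw [← hnormp]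
    exact hnorm
  have hlt : p ^ (p - 1).totient < p ^ ((p - 1).totient + 1) :=
    pow_lt_pow_right₀ hp.one_lt (Nat.lt_succ_self _)
  have hle : p ^ ((p - 1).totient + 1) ≤ p ^ (p - 1).totient :=
    Nat.le_of_dvd (pow_pos hp.pos _) hfinal
  omega
end
end
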